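/- Let C_n be the cycle graph on n vertices with n ≥ 5 (or the bi-infinite path C_∞). Then Ric(C_n) = 0: Γ₂(f)(x) ≥ 0 for every f and x, and for every K > 0 there exist f and x with Γ₂(f)(x) < K·Γ(f)(x). (Equality is achieved by the function taking values −2,−1,0,1,2 along a path of length 4 centered at x.) -/

import Mathlib

noncomputable section
open Matrix

/-- The graph Laplacian: `Δ f (x) = Σ_{y ~ x} (f y - f x)`. -/
def lap {V : Type*} (G : SimpleGraph V) (f : V → ℝ) (x : V) : ℝ :=
  ∑ᶠ y ∈ {y | G.Adj x y}, (f y - f x)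

/-- The carré du champ `Γ(f,g)(x) = (1/2) Σ_{y ~ x} (f x - f y)(g x - g y)`. -/
def gam {V : Type*} (G : SimpleGraph V) (f g : V → ℝ) (x : V) : ℝ :=
  (1/2) * ∑ᶠ y ∈ {y | G.Adj x y}, (f x - f y) * (g x - g y)

/-- The iterated carré du champ `Γ₂(f) = (1/2) Δ Γ(f) - Γ(f, Δ f)`. -/
def gam2 {V : Type*} (G : SimpleGraph V) (f : V → ℝ) (x : V) : ℝ :=
  (1/2) * lap G (gam G f f) x - gam G f (lap G f) x

/-- `Ric(G) ≥ K` : the Bochner inequality `Γ₂(f)(x) ≥ K Γ(f)(x)` holds for all `f, x`. -/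
def RicGE {V : Type*} (G : SimpleGraph V) (K : ℝ) : Prop :=
  ∀ (f : V → ℝ) (x : V), K * gam G f f x ≤ gam2 G f x

/-- The cycle graph `Cₙ` on `ZMod n`: `x ~ y` iff `x ≠ y` and `x - y = ±1`. -/
def cycleGraph (n : ℕ) : SimpleGraph (ZMod n) where
  Adj x y := x ≠ y ∧ (x - y = 1 ∨ y - x = 1)
  symm := by constructor; rintro x y ⟨h, h2⟩; exact ⟨h.symm, h2.symm⟩
  loopless := by constructor; rintro x ⟨h, -⟩; exact h rfl

/-- The bi-infinite path `C_∞` on `ℤ`. -/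
def pathGraph : SimpleGraph ℤ where
  Adj x y := x = y + 1 ∨ y = x + 1
  symm := by constructor; rintro x y (h | h); exacts [Or.inr h, Or.inl h]
  loopless := by constructor; rintro x (h | h) <;> omega

section Aux

lemma lap_pair {V : Type*} (G : SimpleGraph V) (f : V → ℝ) {x a b : V}
    (h : {y | G.Adj x y} = {a, b}) (hab : a ≠ b) :
    lap G f x = (f a - f x) + (f b - f x) := by
  rw [lap, h, finsum_mem_pair hab]

lemma gam_pair {V : Type*} (G : SimpleGraph V) (f g : V → ℝ) {x a b : V}
    (h : {y | G.Adj x y} = {a, b}) (hab : a ≠ b) :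
    gam G f g x = (1/2) * ((f x - f a) * (g x - g a) + (f x - f b) * (g x - g b)) := by
  rw [gam, h, finsum_mem_pair hab]

lemma gam2_formula {V : Type*} (G : SimpleGraph V) (f : V → ℝ) {x₀ x₁ x₂ x₃ x₄ : V}
    (n1 : {y | G.Adj x₁ y} = {x₀, x₂}) (d1 : x₀ ≠ x₂)
    (n2 : {y | G.Adj x₂ y} = {x₁, x₃}) (d2 : x₁ ≠ x₃)
    (n3 : {y | G.Adj x₃ y} = {x₂, x₄}) (d3 : x₂ ≠ x₄) :
    gam2 G f x₂ = (1/4) * ((f x₀ - 2 * f x₁ + f x₂)^2 + (f x₂ - 2 * f x₃ + f x₄)^2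
      + 2 * (f x₁ - 2 * f x₂ + f x₃)^2) := by
  rw [gam2, gam_pair G f (lap G f) n2 d2, lap_pair G (gam G f f) n2 d2,
    gam_pair G f f n1 d1, gam_pair G f f n2 d2, gam_pair G f f n3 d3,
    lap_pair G f n1 d1, lap_pair G f n2 d2, lap_pair G f n3 d3]
  ring

lemma path_nbhd (x : ℤ) : {y | pathGraph.Adj x y} = {x - 1, x + 1} := by
  ext y
  show (x = y + 1 ∨ y = x + 1) ↔ y = x - 1 ∨ y = x + 1
  omega

lemma cycle_nbhd {n : ℕ} (h1 : (1 : ZMod n) ≠ 0) (x : ZMod n) :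
    {y | (cycleGraph n).Adj x y} = {x - 1, x + 1} := by
  ext y
  show (x ≠ y ∧ (x - y = 1 ∨ y - x = 1)) ↔ y = x - 1 ∨ y = x + 1
  constructor
  · rintro ⟨-, h | h⟩
    · left; rw [← h]; ring
    · right; rw [← h]; ring
  · rintro (rfl | rfl)
    · exact ⟨fun h => h1 (by linear_combination h), Or.inl (by ring)⟩
    · exact ⟨fun h => h1 (by linear_combination -h), Or.inr (by ring)⟩

end Aux

/-- `Ric(Cₙ) = 0` for the cycle on `n ≥ 5` vertices, and likewise for the
bi-infinite path `C_∞`: `Γ₂(f)(x) ≥ 0` always, and for every `K > 0` the Bochner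
inequality with constant `K` fails for some `f, x`. -/
theorem ric_cycle :
    (∀ n : ℕ, 5 ≤ n →
      ((∀ (f : ZMod n → ℝ) (x : ZMod n), 0 ≤ gam2 (cycleGraph n) f x) ∧
        (∀ K : ℝ, 0 < K → ∃ (f : ZMod n → ℝ) (x : ZMod n),
          gam2 (cycleGraph n) f x < K * gam (cycleGraph n) f f x))) ∧
    ((∀ (f : ℤ → ℝ) (x : ℤ), 0 ≤ gam2 pathGraph f x) ∧
      (∀ K : ℝ, 0 < K → ∃ (f : ℤ → ℝ) (x : ℤ),
        gam2 pathGraph f x < K * gam pathGraph f f x)) := by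
  have main : ∀ n : ℕ, 5 ≤ n →
      ((∀ (f : ZMod n → ℝ) (x : ZMod n), 0 ≤ gam2 (cycleGraph n) f x) ∧
        (∀ K : ℝ, 0 < K → ∃ (f : ZMod n → ℝ) (x : ZMod n),
          gam2 (cycleGraph n) f x < K * gam (cycleGraph n) f f x)) := by
    intro n hn
    have h1 : (1 : ZMod n) ≠ 0 := by
      rw [show (1 : ZMod n) = ((1 : ℕ) : ZMod n) by norm_num, Ne,
        ZMod.natCast_eq_zero_iff]
      exact fun h => by have := Nat.le_of_dvd (by norm_num) h; omega
    have h2 : (2 : ZMod n) ≠ 0 := by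
      rw [show (2 : ZMod n) = ((2 : ℕ) : ZMod n) by norm_num, Ne,
        ZMod.natCast_eq_zero_iff]
      exact fun h => by have := Nat.le_of_dvd (by norm_num) h; omega
    have h3 : (3 : ZMod n) ≠ 0 := by
      rw [show (3 : ZMod n) = ((3 : ℕ) : ZMod n) by norm_num, Ne,
        ZMod.natCast_eq_zero_iff]
      exact fun h => by have := Nat.le_of_dvd (by norm_num) h; omega
    have h4 : (4 : ZMod n) ≠ 0 := by
      rw [show (4 : ZMod n) = ((4 : ℕ) : ZMod n) by norm_num, Ne,
        ZMod.natCast_eq_zero_iff]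
      exact fun h => by have := Nat.le_of_dvd (by norm_num) h; omega
    have hform : ∀ (f : ZMod n → ℝ) (x : ZMod n),
        gam2 (cycleGraph n) f x = (1/4) * ((f (x-2) - 2 * f (x-1) + f x)^2
          + (f x - 2 * f (x+1) + f (x+2))^2 + 2 * (f (x-1) - 2 * f x + f (x+1))^2) := by
      intro f x
      have n1 : {y | (cycleGraph n).Adj (x-1) y} = {x-2, x} := by
        rw [cycle_nbhd h1 (x-1), show x-1-1 = x-2 from by ring, show x-1+1 = x from by ring]
      have n2 : {y | (cycleGraph n).Adj x y} = {x-1, x+1} := cycle_nbhd h1 x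
      have n3 : {y | (cycleGraph n).Adj (x+1) y} = {x, x+2} := by
        rw [cycle_nbhd h1 (x+1), show x+1-1 = x from by ring, show x+1+1 = x+2 from by ring]
      exact gam2_formula (cycleGraph n) f n1
        (fun h => h2 (by linear_combination -h)) n2
        (fun h => h2 (by linear_combination -h)) n3
        (fun h => h2 (by linear_combination -h))
    have hgam : ∀ (f : ZMod n → ℝ) (x : ZMod n),
        gam (cycleGraph n) f f x = (1/2) * ((f x - f (x-1)) * (f x - f (x-1))
          + (f x - f (x+1)) * (f x - f (x+1))) :=
      fun f x => gam_pair (cycleGraph n) f f (cycle_nbhd h1 x)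
        (fun h => h2 (by linear_combination -h))
    refine ⟨fun f x => by rw [hform]; positivity, fun K hK => ?_⟩
    set F : ZMod n → ℝ := fun y =>
      if y = 1 then 1 else if y = 2 then 2 else if y = -1 then -1
        else if y = -2 then -2 else 0 with hF
    have v1 : F 1 = 1 := if_pos rfl
    have v2 : F 2 = 2 := by
      rw [hF]; simp only
      rw [if_neg (fun h : (2:ZMod n) = 1 => h1 (by linear_combination h))]
      norm_num
    have vm1 : F (-1) = -1 := by
      rw [hF]; simp only
      rw [if_neg (fun h : (-1:ZMod n) = 1 => h2 (by linear_combination -h)),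
        if_neg (fun h : (-1:ZMod n) = 2 => h3 (by linear_combination -h))]
      norm_num
    have vm2 : F (-2) = -2 := by
      rw [hF]; simp only
      rw [if_neg (fun h : (-2:ZMod n) = 1 => h3 (by linear_combination -h)),
        if_neg (fun h : (-2:ZMod n) = 2 => h4 (by linear_combination -h)),
        if_neg (fun h : (-2:ZMod n) = -1 => h1 (by linear_combination -h))]
      norm_num
    have v0 : F 0 = 0 := by
      rw [hF]; simp only
      rw [if_neg (fun h : (0:ZMod n) = 1 => h1 (by linear_combination -h)),
        if_neg (fun h : (0:ZMod n) = 2 => h2 (by linear_combination -h)),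
        if_neg (fun h : (0:ZMod n) = -1 => h1 (by linear_combination h)),
        if_neg (fun h : (0:ZMod n) = -2 => h2 (by linear_combination h))]
    refine ⟨F, 0, ?_⟩
    rw [hform F 0, hgam F 0, show (0:ZMod n) - 2 = -2 from by ring,
      show (0:ZMod n) - 1 = -1 from by ring, show (0:ZMod n) + 1 = 1 from by ring,
      show (0:ZMod n) + 2 = 2 from by ring, v0, v1, v2, vm1, vm2]
    norm_num
    linarith
  refine ⟨main, ?_, ?_⟩
  · intro f x
    have n1 : {y | pathGraph.Adj (x-1) y} = {x-2, x} := by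
      rw [path_nbhd (x-1), show x-1-1 = x-2 from by ring, show x-1+1 = x from by ring]
    have n3 : {y | pathGraph.Adj (x+1) y} = {x, x+2} := by
      rw [path_nbhd (x+1), show x+1-1 = x from by ring, show x+1+1 = x+2 from by ring]
    rw [gam2_formula pathGraph f n1 (by omega) (path_nbhd x) (by omega) n3 (by omega)]
    positivity
  · intro K hK
    refine ⟨fun y => (y : ℝ), 0, ?_⟩
    have n1 : {y | pathGraph.Adj ((0:ℤ)-1) y} = {(0:ℤ)-2, 0} := by
      rw [path_nbhd ((0:ℤ)-1)]; norm_num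
    have n3 : {y | pathGraph.Adj ((0:ℤ)+1) y} = {(0:ℤ), 0+2} := by
      rw [path_nbhd ((0:ℤ)+1)]; norm_num
    rw [gam2_formula pathGraph (fun y => (y:ℝ)) n1 (by omega) (path_nbhd 0) (by omega)
      n3 (by omega), gam_pair pathGraph _ _ (path_nbhd 0) (by omega)]
    push_cast
    norm_num
    linarith
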